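/- arXiv:2510.11191 — 2 statements merged into one kernel-verified Lean document; each statement's English description precedes it below -/
import Mathlib

section
/- Let m and n be integers and let c be a positive integer. Then S(m,n;c)·e((m+n)/c) = Σ_{q,r ≥ 1, qr = c} V_q(m,n;r), where the sum runs over all factorizations of c into an ordered pair of positive integers q, r. -/
open scoped Classical

/-- `e(x) = exp(2πix)`. -/
noncomputable def e (x : ℝ) : ℂ := Complex.exp (2 * Real.pi * Complex.I * x)

/-- The Kloosterman sum `S(m,n;c) = ∑_{α mod c, (α,c)=1} e((αm + α*n)/c)`,
where `α*` is the inverse of `α` modulo `c`. -/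
noncomputable def kloosterman (m n : ℤ) (c : ℕ) : ℂ :=
  ∑ α ∈ Finset.range c,
    if IsUnit (α : ZMod c) then
      e (((α : ℝ) * (m : ℝ) + ((((α : ZMod c)⁻¹).val : ℝ) * (n : ℝ))) / c)
    else 0

/-- `V_q(m,n;c) = ∑_{α mod c, (α(q-α),c)=1} e((α* m + (q-α)* n)/c)`. -/
noncomputable def Vsum (q m n : ℤ) (c : ℕ) : ℂ :=
  ∑ α ∈ Finset.range c,
    if IsUnit ((α : ZMod c)) ∧ IsUnit ((q : ZMod c) - (α : ZMod c)) then
      e (((((α : ZMod c)⁻¹).val : ℝ) * (m : ℝ)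
          + ((((q : ZMod c) - (α : ZMod c))⁻¹).val : ℝ) * (n : ℝ)) / c)
    else 0


section aux
set_option linter.unusedSectionVars false

lemma e_add (x y : ℝ) : e (x + y) = e x * e y := by
  rw [e, e, e, ← Complex.exp_add]
  push_cast
  ring_nf

lemma e_int (k : ℤ) : e (k : ℝ) = 1 := by
  have h : (2 * (Real.pi : ℂ) * Complex.I * ((k : ℝ) : ℂ)) = (k : ℤ) * (2 * Real.pi * Complex.I) := by
    push_cast; ring
  rw [e, h, Complex.exp_int_mul_two_pi_mul_I]

lemma e_congr {c : ℕ} (hc : c ≠ 0) {A B : ℤ} (h : (A : ZMod c) = (B : ZMod c)) :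
    e ((A : ℝ) / c) = e ((B : ℝ) / c) := by
  rw [ZMod.intCast_eq_intCast_iff] at h
  obtain ⟨k, hk⟩ := Int.ModEq.dvd h
  have hcR : (c : ℝ) ≠ 0 := Nat.cast_ne_zero.mpr hc
  have hB : (B : ℝ) = (A : ℝ) + (c : ℝ) * (k : ℝ) := by
    have : (B : ℤ) = A + c * k := by omega
    exact_mod_cast congrArg (Int.cast : ℤ → ℝ) this
  have : (B : ℝ) / c = (A : ℝ) / c + ((k : ℤ) : ℝ) := by
    rw [hB]; field_simp
  rw [this, e_add, e_int, mul_one]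

lemma zmod_inv_eq {n : ℕ} {w z : ZMod n} (hw : IsUnit w) (h : w * z = 1) : w⁻¹ = z := by
  calc w⁻¹ = w⁻¹ * (w * z) := by rw [h, mul_one]
  _ = (w⁻¹ * w) * z := by ring
  _ = z := by rw [ZMod.inv_mul_of_unit w hw, one_mul]

lemma zmod_isUnit_inv {n : ℕ} {w : ZMod n} (hw : IsUnit w) : IsUnit w⁻¹ :=
  IsUnit.of_mul_eq_one w (ZMod.inv_mul_of_unit w hw)

lemma zmod_inv_inv {n : ℕ} {w : ZMod n} (hw : IsUnit w) : w⁻¹⁻¹ = w :=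
  zmod_inv_eq (zmod_isUnit_inv hw) (ZMod.inv_mul_of_unit w hw)

lemma isUnit_intCast_iff {n : ℕ} (hn : n ≠ 0) (z : ℤ) :
    IsUnit ((z : ZMod n)) ↔ IsCoprime z (n : ℤ) := by
  haveI : NeZero n := ⟨hn⟩
  constructor
  · intro h
    set w := ((z : ZMod n)⁻¹).val with hw
    have h1 : ((z * (w : ℤ) : ℤ) : ZMod n) = ((1 : ℤ) : ZMod n) := by
      push_cast
      rw [hw, ZMod.natCast_val, ZMod.cast_id, ZMod.mul_inv_of_unit _ h]
    rw [ZMod.intCast_eq_intCast_iff] at h1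
    obtain ⟨k, hk⟩ := Int.ModEq.dvd h1
    exact ⟨(w : ℤ), k, by linear_combination -hk⟩
  · rintro ⟨a, b, hab⟩
    have h2 : ((a : ZMod n)) * (z : ZMod n) = 1 := by
      have : ((a * z + b * n : ℤ) : ZMod n) = ((1 : ℤ) : ZMod n) := by rw [hab]
      push_cast at this
      simpa [ZMod.natCast_self] using this
    exact IsUnit.of_mul_eq_one _ (mul_comm (z : ZMod n) (a : ZMod n) ▸ h2)

lemma gcd_eq_of_modEq {a b n : ℕ} (h : a ≡ b [MOD n]) : Nat.gcd a n = Nat.gcd b n := by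
  rw [Nat.gcd_comm a n, Nat.gcd_comm b n, Nat.gcd_rec n a, Nat.gcd_rec n b,
    show a % n = b % n from h]

def fwdQ (c α : ℕ) : ℕ := Nat.gcd (α + 1) c
def fwdR (c α : ℕ) : ℕ := c / fwdQ c α
def fwdU (c α : ℕ) : ℕ := (α + 1) / fwdQ c α
noncomputable def fwdB (c α : ℕ) : ℕ := (((fwdU c α : ZMod (fwdR c α)))⁻¹).val
noncomputable def bwd (c q r β : ℕ) : ℕ := (q * (((β : ZMod r))⁻¹).val + (c - 1)) % c

section fwd
variable (c α : ℕ) (hc : 0 < c)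

lemma fwdQ_pos : 0 < fwdQ c α := Nat.gcd_pos_of_pos_left c (Nat.succ_pos α)

lemma fwdQ_dvd : fwdQ c α ∣ c := Nat.gcd_dvd_right _ _

lemma fwd_mul : fwdQ c α * fwdR c α = c := Nat.mul_div_cancel' (fwdQ_dvd c α)

include hc in
lemma fwdR_pos : 0 < fwdR c α :=
  Nat.div_pos (Nat.le_of_dvd hc (fwdQ_dvd c α)) (fwdQ_pos c α)

lemma fwdR_dvd : fwdR c α ∣ c := Dvd.intro_left _ (fwd_mul c α)

lemma fwdU_mul : fwdQ c α * fwdU c α = α + 1 := Nat.mul_div_cancel' (Nat.gcd_dvd_left _ _)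

lemma fwdU_coprime : Nat.Coprime (fwdU c α) (fwdR c α) :=
  Nat.coprime_div_gcd_div_gcd (fwdQ_pos c α)

lemma fwdU_unit : IsUnit ((fwdU c α : ZMod (fwdR c α))) :=
  (ZMod.isUnit_iff_coprime _ _).mpr (fwdU_coprime c α)

include hc in
lemma fwdB_cast : ((fwdB c α : ZMod (fwdR c α))) = ((fwdU c α : ZMod (fwdR c α)))⁻¹ := by
  haveI : NeZero (fwdR c α) := ⟨(fwdR_pos c α hc).ne'⟩
  rw [fwdB, ZMod.natCast_val, ZMod.cast_id]

include hc in
lemma fwdB_unit : IsUnit ((fwdB c α : ZMod (fwdR c α))) := by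
  rw [fwdB_cast c α hc]; exact zmod_isUnit_inv (fwdU_unit c α)

variable (hαu : IsUnit ((α : ZMod c)))

include hc hαu in
lemma alpha_unit_r : IsUnit ((α : ZMod (fwdR c α))) := by
  refine (ZMod.isUnit_iff_coprime _ _).mpr ?_
  exact Nat.Coprime.coprime_dvd_right (fwdR_dvd c α) ((ZMod.isUnit_iff_coprime _ _).mp hαu)

include hc hαu in
lemma fwd_key :
    ((fwdQ c α : ZMod (fwdR c α))) - (fwdB c α : ZMod (fwdR c α))
      = ((fwdU c α : ZMod (fwdR c α)))⁻¹ * (α : ZMod (fwdR c α)) := by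
  have h1 : ((fwdU c α : ZMod (fwdR c α)))⁻¹ * (fwdU c α : ZMod (fwdR c α)) = 1 :=
    ZMod.inv_mul_of_unit _ (fwdU_unit c α)
  have h2 : (fwdQ c α : ZMod (fwdR c α)) * (fwdU c α : ZMod (fwdR c α))
      = (α : ZMod (fwdR c α)) + 1 := by
    have := congrArg (fun t : ℕ => (t : ZMod (fwdR c α))) (fwdU_mul c α)
    push_cast at this
    exact this
  rw [fwdB_cast c α hc]
  linear_combination (-((fwdQ c α : ZMod (fwdR c α)))) * h1 + ((fwdU c α : ZMod (fwdR c α)))⁻¹ * h2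

include hc hαu in
lemma fwd_key_unit :
    IsUnit (((fwdQ c α : ZMod (fwdR c α))) - (fwdB c α : ZMod (fwdR c α))) := by
  rw [fwd_key c α hc hαu]
  exact (zmod_isUnit_inv (fwdU_unit c α)).mul (alpha_unit_r c α hc hαu)

end fwd

section bwd
variable {c q r β : ℕ}

lemma bwd_succ_modeq (c q r β : ℕ) (hc : 0 < c) :
    bwd c q r β + 1 ≡ q * (((β : ZMod r))⁻¹).val [MOD c] := by
  set X := (((β : ZMod r))⁻¹).val
  have h1 : bwd c q r β + 1 ≡ q * X + (c - 1) + 1 [MOD c] := (Nat.mod_modEq _ c).add_right 1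
  have h2 : q * X + (c - 1) + 1 = q * X + c := by omega
  have h3 : q * X + c ≡ q * X [MOD c] := Nat.add_mod_right _ _
  calc bwd c q r β + 1 ≡ q * X + (c - 1) + 1 [MOD c] := h1
    _ = q * X + c := h2
    _ ≡ q * X [MOD c] := h3

lemma bwd_x_cast (hβ : β < r) :
    ((((β : ZMod r))⁻¹).val : ZMod r) = ((β : ZMod r))⁻¹ := by
  haveI : NeZero r := ⟨(lt_of_le_of_lt (Nat.zero_le β) hβ).ne'⟩
  rw [ZMod.natCast_val, ZMod.cast_id]

lemma bwd_x_coprime (hβ : β < r) (h1 : IsUnit ((β : ZMod r))) :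
    Nat.Coprime (((β : ZMod r))⁻¹).val r := by
  refine (ZMod.isUnit_iff_coprime _ _).mp ?_
  rw [bwd_x_cast hβ]
  exact zmod_isUnit_inv h1

lemma bwd_gcd (hc : 0 < c) (hqr : q * r = c) (hβ : β < r) (h1 : IsUnit ((β : ZMod r))) :
    fwdQ c (bwd c q r β) = q := by
  rw [fwdQ, gcd_eq_of_modEq (bwd_succ_modeq c q r β hc), ← hqr, Nat.gcd_mul_left,
    bwd_x_coprime hβ h1, mul_one]

lemma bwd_q_pos (hc : 0 < c) (hqr : q * r = c) : 0 < q := by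
  rcases Nat.eq_zero_or_pos q with h | h
  · subst h; simp at hqr; omega
  · exact h

lemma bwd_fwdR (hc : 0 < c) (hqr : q * r = c) (hβ : β < r) (h1 : IsUnit ((β : ZMod r))) :
    fwdR c (bwd c q r β) = r := by
  rw [fwdR, bwd_gcd hc hqr hβ h1, ← hqr, Nat.mul_div_cancel_left _ (bwd_q_pos hc hqr)]

lemma bwd_u_modeq (hc : 0 < c) (hqr : q * r = c) (hβ : β < r) (h1 : IsUnit ((β : ZMod r))) :
    fwdU c (bwd c q r β) ≡ (((β : ZMod r))⁻¹).val [MOD r] := by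
  have hq := bwd_gcd hc hqr hβ h1
  have hmul : q * fwdU c (bwd c q r β) = bwd c q r β + 1 := by
    have := fwdU_mul c (bwd c q r β); rwa [hq] at this
  have h := bwd_succ_modeq c q r β hc
  rw [← hmul] at h
  have h' : q * fwdU c (bwd c q r β) ≡ q * (((β : ZMod r))⁻¹).val [MOD q * r] := by
    rw [hqr]; exact h
  exact Nat.ModEq.mul_left_cancel' (bwd_q_pos hc hqr).ne' h'

lemma bwd_fwdB (hc : 0 < c) (hqr : q * r = c) (hβ : β < r) (h1 : IsUnit ((β : ZMod r))) :
    fwdB c (bwd c q r β) = β := by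
  rw [fwdB, bwd_fwdR hc hqr hβ h1]
  have hu : ((fwdU c (bwd c q r β) : ZMod r)) = ((β : ZMod r))⁻¹ := by
    rw [(ZMod.natCast_eq_natCast_iff _ _ _).mpr (bwd_u_modeq hc hqr hβ h1), bwd_x_cast hβ]
  rw [hu, zmod_inv_inv h1, ZMod.val_cast_of_lt hβ]

lemma bwd_unit (hc : 0 < c) (hqr : q * r = c) (hβ : β < r) (h1 : IsUnit ((β : ZMod r)))
    (h2 : IsUnit ((q : ZMod r) - (β : ZMod r))) :
    IsUnit ((bwd c q r β : ZMod c)) := by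
  haveI : NeZero r := ⟨(lt_of_le_of_lt (Nat.zero_le β) hβ).ne'⟩
  set X := (((β : ZMod r))⁻¹).val with hX
  have hcast : ((bwd c q r β : ZMod c)) = (((q : ℤ) * X - 1 : ℤ) : ZMod c) := by
    rw [bwd, ZMod.natCast_mod]
    push_cast [Nat.cast_sub (by omega : 1 ≤ c), ZMod.natCast_self]
    ring
  rw [hcast, isUnit_intCast_iff hc.ne']
  have hcq : (c : ℤ) = (q : ℤ) * (r : ℤ) := by exact_mod_cast hqr.symm
  rw [hcq]
  refine IsCoprime.mul_right ⟨-1, (X : ℤ), by ring⟩ ?_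
  rw [← isUnit_intCast_iff (lt_of_le_of_lt (Nat.zero_le β) hβ).ne']
  have hcast2 : (((q : ℤ) * X - 1 : ℤ) : ZMod r) = ((β : ZMod r))⁻¹ * ((q : ZMod r) - (β : ZMod r)) := by
    push_cast
    rw [bwd_x_cast hβ]
    have := ZMod.inv_mul_of_unit _ h1
    linear_combination this
  rw [hcast2]
  exact (zmod_isUnit_inv h1).mul h2

end bwd

lemma fwd_bwd (c α : ℕ) (hc : 0 < c) (hα : α < c) :
    bwd c (fwdQ c α) (fwdR c α) (fwdB c α) = α := by
  have hbb : ((fwdB c α : ZMod (fwdR c α)))⁻¹ = (fwdU c α : ZMod (fwdR c α)) := by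
    rw [fwdB_cast c α hc, zmod_inv_inv (fwdU_unit c α)]
  rw [bwd, hbb, ZMod.val_natCast]
  have h1 : fwdQ c α * (fwdU c α % fwdR c α) + (c - 1)
      ≡ fwdQ c α * fwdU c α + (c - 1) [MOD c] := by
    have := (Nat.ModEq.mul_left' (c := fwdQ c α) (Nat.mod_modEq (fwdU c α) (fwdR c α))).add_right (c - 1)
    rwa [fwd_mul c α] at this
  rw [show (fwdQ c α * (fwdU c α % fwdR c α) + (c - 1)) % c
      = (fwdQ c α * fwdU c α + (c - 1)) % c from h1, fwdU_mul c α,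
    show α + 1 + (c - 1) = α + c by omega, Nat.add_mod_right, Nat.mod_eq_of_lt hα]

lemma fwd_hA (c α : ℕ) (hc : 0 < c) :
    α + 1 ≡ fwdQ c α * ((((fwdB c α : ZMod (fwdR c α)))⁻¹).val) [MOD c] := by
  haveI : NeZero (fwdR c α) := ⟨(fwdR_pos c α hc).ne'⟩
  set X := ((((fwdB c α : ZMod (fwdR c α)))⁻¹).val) with hXdef
  have hX : (X : ZMod (fwdR c α)) = ((fwdU c α : ZMod (fwdR c α))) := by
    rw [hXdef, ZMod.natCast_val, ZMod.cast_id, fwdB_cast c α hc, zmod_inv_inv (fwdU_unit c α)]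
  have hXm : X ≡ fwdU c α [MOD fwdR c α] := (ZMod.natCast_eq_natCast_iff _ _ _).mp hX
  have h := Nat.ModEq.mul_left' (c := fwdQ c α) hXm
  rw [fwd_mul c α, fwdU_mul c α] at h
  exact h.symm

lemma fwd_hB (c α : ℕ) (hc : 0 < c) (hαu : IsUnit ((α : ZMod c))) :
    ((α : ZMod c)⁻¹).val + 1
      ≡ fwdQ c α * (((((fwdQ c α : ZMod (fwdR c α))) - (fwdB c α : ZMod (fwdR c α)))⁻¹).val) [MOD c] := by
  haveI : NeZero c := ⟨hc.ne'⟩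
  haveI : NeZero (fwdR c α) := ⟨(fwdR_pos c α hc).ne'⟩
  set r := fwdR c α with hrdef
  set a' := ((α : ZMod c)⁻¹).val with ha'def
  set Y := (((((fwdQ c α : ZMod r)) - (fwdB c α : ZMod r))⁻¹).val) with hYdef
  have ha'c : a' * α ≡ 1 [MOD c] := by
    refine (ZMod.natCast_eq_natCast_iff _ _ _).mp ?_
    push_cast
    rw [ha'def, ZMod.natCast_val, ZMod.cast_id]
    exact ZMod.inv_mul_of_unit _ hαu
  have ha'r : a' * α ≡ 1 [MOD r] := ha'c.of_dvd (fwdR_dvd c α)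
  have hr_cast : (a' : ZMod r) * (α : ZMod r) = 1 := by
    have := (ZMod.natCast_eq_natCast_iff _ _ _).mpr ha'r
    push_cast at this
    exact this
  have h1 : ((fwdU c α : ZMod r))⁻¹ * (fwdU c α : ZMod r) = 1 :=
    ZMod.inv_mul_of_unit _ (fwdU_unit c α)
  have hWinv : (((fwdQ c α : ZMod r)) - (fwdB c α : ZMod r))⁻¹
      = (a' : ZMod r) * (fwdU c α : ZMod r) := by
    refine zmod_inv_eq (fwd_key_unit c α hc hαu) ?_
    rw [fwd_key c α hc hαu]
    linear_combination ((α : ZMod r) * (a' : ZMod r)) * h1 + hr_cast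
  have hY : (Y : ZMod r) = (a' : ZMod r) * (fwdU c α : ZMod r) := by
    rw [hYdef, ZMod.natCast_val, ZMod.cast_id, hWinv]
  have hYm : Y ≡ a' * fwdU c α [MOD r] := by
    refine (ZMod.natCast_eq_natCast_iff _ _ _).mp ?_
    push_cast
    exact hY
  have h := Nat.ModEq.mul_left' (c := fwdQ c α) hYm
  rw [hrdef, fwd_mul c α] at h
  have hmid : fwdQ c α * (a' * fwdU c α) = a' * α + a' := by
    rw [show fwdQ c α * (a' * fwdU c α) = a' * (fwdQ c α * fwdU c α) by ring, fwdU_mul c α]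
    ring
  rw [hmid] at h
  have h2 : a' * α + a' ≡ 1 + a' [MOD c] := ha'c.add_right a'
  calc a' + 1 = 1 + a' := by ring
    _ ≡ a' * α + a' [MOD c] := h2.symm
    _ ≡ fwdQ c α * Y [MOD c] := h.symm

lemma term_zmod (c α : ℕ) (hc : 0 < c) (hαu : IsUnit ((α : ZMod c))) (m n : ℤ) :
    (((α : ℤ) * m + ((((α : ZMod c)⁻¹).val : ℕ) : ℤ) * n + (m + n) : ℤ) : ZMod c)
      = ((((fwdQ c α : ℕ) : ℤ) * ((((((fwdB c α : ZMod (fwdR c α)))⁻¹).val : ℕ) : ℤ) * m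
          + ((((((fwdQ c α : ZMod (fwdR c α))) - (fwdB c α : ZMod (fwdR c α)))⁻¹).val : ℕ) : ℤ) * n) : ℤ) : ZMod c) := by
  have hA := (ZMod.natCast_eq_natCast_iff _ _ _).mpr (fwd_hA c α hc)
  have hB := (ZMod.natCast_eq_natCast_iff _ _ _).mpr (fwd_hB c α hc hαu)
  push_cast at hA hB ⊢
  linear_combination (m : ZMod c) * hA + (n : ZMod c) * hB


end aux

/-- `S(m,n;c)·e((m+n)/c) = ∑_{qr = c} V_q(m,n;r)`, the sum being over ordered pairs
of positive integers `(q,r)` with `qr = c`. -/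
theorem kloosterman_eq_sum_Vsum (m n : ℤ) (c : ℕ) (hc : 0 < c) :
    kloosterman m n c * e (((m : ℝ) + (n : ℝ)) / c)
      = ∑ p ∈ c.divisorsAntidiagonal, Vsum (p.1 : ℤ) m n p.2 := by
  rw [kloosterman, ← Finset.sum_filter, Finset.sum_mul]
  have hR : ∑ p ∈ c.divisorsAntidiagonal, Vsum (p.1 : ℤ) m n p.2
      = ∑ p ∈ c.divisorsAntidiagonal, ∑ β ∈ Finset.filter
          (fun β : ℕ => IsUnit ((β : ZMod p.2)) ∧ IsUnit ((((p.1 : ℤ)) : ZMod p.2) - (β : ZMod p.2)))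
          (Finset.range p.2),
          e ((((((β : ZMod p.2))⁻¹).val : ℝ) * (m : ℝ)
            + (((((p.1 : ℤ) : ZMod p.2) - (β : ZMod p.2))⁻¹).val : ℝ) * (n : ℝ)) / p.2) :=
    Finset.sum_congr rfl fun p _ => by rw [Vsum, ← Finset.sum_filter]
  rw [hR, Finset.sum_sigma']
  refine Finset.sum_bij' (fun α _ => (⟨(fwdQ c α, fwdR c α), fwdB c α⟩ : (_ : ℕ × ℕ) × ℕ))
    (fun x _ => bwd c x.1.1 x.1.2 x.2) ?_ ?_ ?_ ?_ ?_
  · -- hi : forward membership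
    intro α hα
    simp only [Finset.mem_filter, Finset.mem_range] at hα
    obtain ⟨hαlt, hαu⟩ := hα
    haveI : NeZero (fwdR c α) := ⟨(fwdR_pos c α hc).ne'⟩
    simp only [Finset.mem_sigma]
    constructor
    · rw [Nat.mem_divisorsAntidiagonal]
      exact ⟨fwd_mul c α, hc.ne'⟩
    · simp only [Finset.mem_filter, Finset.mem_range]
      refine ⟨ZMod.val_lt _, fwdB_unit c α hc, ?_⟩
      rw [Int.cast_natCast]
      exact fwd_key_unit c α hc hαu
  · -- hj : backward membership
    intro x hx
    simp only [Finset.mem_sigma, Nat.mem_divisorsAntidiagonal, Finset.mem_filter, Finset.mem_range] at hx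
    obtain ⟨⟨hqr, -⟩, hβ, h1, h2⟩ := hx
    rw [Int.cast_natCast] at h2
    simp only [Finset.mem_filter, Finset.mem_range]
    exact ⟨Nat.mod_lt _ hc, bwd_unit hc hqr hβ h1 h2⟩
  · -- left inverse
    intro α hα
    simp only [Finset.mem_filter, Finset.mem_range] at hα
    exact fwd_bwd c α hc hα.1
  · -- right inverse
    intro x hx
    obtain ⟨⟨q, r⟩, β⟩ := x
    simp only [Finset.mem_sigma, Nat.mem_divisorsAntidiagonal, Finset.mem_filter, Finset.mem_range] at hx
    obtain ⟨⟨hqr, -⟩, hβ, h1, h2⟩ := hx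
    dsimp only at hqr hβ h1 h2 ⊢
    rw [bwd_gcd hc hqr hβ h1, bwd_fwdR hc hqr hβ h1, bwd_fwdB hc hqr hβ h1]
  · -- term equality
    intro α hα
    simp only [Finset.mem_filter, Finset.mem_range] at hα
    obtain ⟨hαlt, hαu⟩ := hα
    dsimp only
    haveI : NeZero (fwdR c α) := ⟨(fwdR_pos c α hc).ne'⟩
    have hqR : ((fwdQ c α : ℝ)) ≠ 0 := Nat.cast_ne_zero.mpr (fwdQ_pos c α).ne'
    have hcr : (c : ℝ) = (fwdQ c α : ℝ) * (fwdR c α : ℝ) := by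
      exact_mod_cast (fwd_mul c α).symm
    rw [← e_add, ← add_div, Int.cast_natCast]
    have harg1 : (α : ℝ) * (m : ℝ) + ((((α : ZMod c)⁻¹).val : ℕ) : ℝ) * (n : ℝ) + ((m : ℝ) + (n : ℝ))
        = (((α : ℤ) * m + ((((α : ZMod c)⁻¹).val : ℕ) : ℤ) * n + (m + n) : ℤ) : ℝ) := by
      push_cast; ring
    have harg2 : (((((fwdB c α : ZMod (fwdR c α)))⁻¹).val : ℝ) * (m : ℝ)
          + ((((((fwdQ c α : ZMod (fwdR c α))) - (fwdB c α : ZMod (fwdR c α)))⁻¹).val : ℝ) * (n : ℝ))) / (fwdR c α : ℝ)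
        = (((fwdQ c α : ℤ) * (((((fwdB c α : ZMod (fwdR c α)))⁻¹).val : ℤ) * m
          + ((((((fwdQ c α : ZMod (fwdR c α))) - (fwdB c α : ZMod (fwdR c α)))⁻¹).val : ℤ) * n)) : ℤ) : ℝ) / (c : ℝ) := by
      rw [hcr]
      push_cast
      rw [mul_div_mul_left _ _ hqR]
    rw [harg1, harg2]
    exact e_congr hc.ne' (term_zmod c α hc hαu m n)
end

section
/- Fix ε ∈ (0,1/2) and a real A ≥ 0. There is a constant C = C(ε, A) such that for all T ≥ 2 and all M with T^ε ≤ M ≤ T^{1−ε}, one has |(1/π²) ∫_{−∞}^{∞} h(t)·tanh(πt)·t dt − (2/(π√π))·M·T| ≤ C · M·T · T^{−A}. -/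
open MeasureTheory

/-- `β(r) = exp(-r²)`. -/
noncomputable def βfun (r : ℝ) : ℝ := Real.exp (-r ^ 2)

/-- `h(t) = β((t-T)/M) + β((t+T)/M)`. -/
noncomputable def hfun (T M t : ℝ) : ℝ := βfun ((t - T) / M) + βfun ((t + T) / M)

open Real in
lemma dwa_abs_tanh_le_one (x : ℝ) : |Real.tanh x| ≤ 1 := by
  rw [Real.tanh_eq_sinh_div_cosh, abs_div, abs_of_pos (Real.cosh_pos x),
    div_le_one (Real.cosh_pos x)]
  have h1 := Real.cosh_sub_sinh x
  have h2 := Real.cosh_add_sinh x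
  have e1 := Real.exp_pos (-x)
  have e2 := Real.exp_pos x
  rcases abs_cases (Real.sinh x) with ⟨h, _⟩ | ⟨h, _⟩ <;> linarith

open Real in
lemma dwa_one_sub_tanh_le (x : ℝ) : 1 - Real.tanh x ≤ 2 * Real.exp (-(2*x)) := by
  have hc := Real.cosh_pos x
  have h1 : 1 - Real.tanh x = Real.exp (-x) / Real.cosh x := by
    rw [Real.tanh_eq_sinh_div_cosh, ← Real.cosh_sub_sinh x]
    field_simp
  rw [h1]
  have h2 : Real.exp x / 2 ≤ Real.cosh x := by
    rw [Real.cosh_eq]; have := Real.exp_pos (-x); linarith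
  have h3 : Real.exp (-x) / Real.cosh x ≤ Real.exp (-x) / (Real.exp x / 2) :=
    div_le_div_of_nonneg_left (Real.exp_pos (-x)).le (by positivity) h2
  calc Real.exp (-x) / Real.cosh x ≤ Real.exp (-x) / (Real.exp x / 2) := h3
    _ = 2 * Real.exp (-(2*x)) := by
        rw [div_div_eq_mul_div, mul_comm, mul_div_assoc, div_eq_mul_inv, ← Real.exp_neg,
          ← Real.exp_add]
        ring_nf

lemma dwa_cont_tanh : Continuous Real.tanh := by
  have : Real.tanh = fun x => Real.sinh x / Real.cosh x :=
    funext fun x => Real.tanh_eq_sinh_div_cosh x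
  rw [this]; exact Real.continuous_sinh.div Real.continuous_cosh (fun x => (Real.cosh_pos x).ne')

open Real in
lemma dwa_odd_gauss (c : ℝ) : (∫ t : ℝ, t * Real.exp (-c * t^2)) = 0 := by
  have h := integral_neg_eq_self (fun t : ℝ => t * Real.exp (-c * t^2)) (volume : Measure ℝ)
  have h2 : (fun t : ℝ => (-t) * Real.exp (-c * (-t)^2)) =
      fun t : ℝ => -(t * Real.exp (-c * t^2)) := by
    funext t; rw [neg_sq]; ring
  rw [h2, integral_neg] at h
  linarith

open Real in
lemma dwa_int_gauss (c S : ℝ) (hc : 0 < c) :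
    Integrable (fun t : ℝ => Real.exp (-c * (t - S)^2)) :=
  (integrable_exp_neg_mul_sq hc).comp_sub_right S

open Real in
lemma dwa_int_gauss_mul (c S : ℝ) (hc : 0 < c) :
    Integrable (fun t : ℝ => Real.exp (-c*(t-S)^2) * t) := by
  have h1 := (integrable_mul_exp_neg_mul_sq hc).comp_sub_right S
  have h2 := ((integrable_exp_neg_mul_sq hc).comp_sub_right S).const_mul S
  exact (h1.add h2).congr (Filter.Eventually.of_forall fun t => by
    simp only [Pi.add_apply]; ring)

open Real in
lemma dwa_gauss_integral (c S : ℝ) (hc : 0 < c) :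
    (∫ t : ℝ, Real.exp (-c * (t - S)^2)) = Real.sqrt (π / c) := by
  rw [← integral_add_right_eq_self (fun t : ℝ => Real.exp (-c * (t - S)^2)) S]
  simp only [add_sub_cancel_right]
  exact integral_gaussian c

open Real in
lemma dwa_gauss_moment (c S : ℝ) (hc : 0 < c) :
    (∫ t : ℝ, Real.exp (-c * (t - S)^2) * t) = Real.sqrt (π / c) * S := by
  rw [← integral_add_right_eq_self (fun t : ℝ => Real.exp (-c * (t - S)^2) * t) S]
  simp only [add_sub_cancel_right]
  have : (fun t : ℝ => Real.exp (-c * t^2) * (t + S)) =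
      fun t : ℝ => t * Real.exp (-c * t^2) + S * Real.exp (-c * t^2) := by
    funext t; ring
  rw [this, integral_add (integrable_mul_exp_neg_mul_sq hc)
      ((integrable_exp_neg_mul_sq hc).const_mul S), dwa_odd_gauss,
    MeasureTheory.integral_const_mul, integral_gaussian]
  ring

open Real in
lemma dwa_decay (ε A : ℝ) (hε : 0 < ε) (hA : 0 ≤ A) :
    ∃ C : ℝ, 0 ≤ C ∧ ∀ T : ℝ, 2 ≤ T →
      Real.exp (-(T ^ (2*ε)) / 8) ≤ C * T ^ (-A) := by
  set δ : ℝ := ε / (4 * (A + 1)) with hδdef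
  have hδ : 0 < δ := by positivity
  set K : ℝ := A / (2*ε) * (-1 - Real.log δ) with hK
  refine ⟨Real.exp K, (Real.exp_pos K).le, fun T hT => ?_⟩
  have hT0 : (0:ℝ) < T := by linarith
  have hu0 : (0:ℝ) < T ^ (2*ε) := Real.rpow_pos_of_pos hT0 _
  set u : ℝ := T ^ (2*ε) with hu
  have hlogu : Real.log u = 2*ε * Real.log T := Real.log_rpow hT0 _
  have hlog : Real.log u ≤ δ * u - 1 - Real.log δ := by
    have h1 : Real.log (δ * u) ≤ δ * u - 1 := Real.log_le_sub_one_of_pos (by positivity)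
    rw [Real.log_mul hδ.ne' hu0.ne'] at h1
    linarith
  have hAlog : A * Real.log T ≤ u / 8 + K := by
    have h2 : A * Real.log T = A / (2*ε) * Real.log u := by
      rw [hlogu]; field_simp
    have h3 : A / (2*ε) * δ ≤ 1/8 := by
      rw [hδdef, div_mul_div_comm, div_le_div_iff₀ (by positivity) (by norm_num)]
      ring_nf
      nlinarith
    have h4 : A / (2*ε) ≥ 0 := by positivity
    have h5 : A / (2*ε) * Real.log u ≤ A / (2*ε) * (δ * u - 1 - Real.log δ) :=
      mul_le_mul_of_nonneg_left hlog h4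
    have h6 : A / (2*ε) * (δ * u) ≤ u / 8 := by
      have := mul_le_mul_of_nonneg_right h3 hu0.le
      calc A / (2*ε) * (δ * u) = A / (2*ε) * δ * u := by ring
        _ ≤ 1/8 * u := this
        _ = u / 8 := by ring
    calc A * Real.log T = A / (2*ε) * Real.log u := h2
      _ ≤ A / (2*ε) * (δ * u - 1 - Real.log δ) := h5
      _ = A / (2*ε) * (δ * u) + A / (2*ε) * (-1 - Real.log δ) := by ring
      _ ≤ u / 8 + K := by rw [hK]; linarith
  have hrpow : T ^ (-A) = Real.exp (-A * Real.log T) := by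
    rw [Real.rpow_def_of_pos hT0]; ring_nf
  rw [hrpow, ← Real.exp_add]
  apply Real.exp_le_exp.2
  linarith

open Real in
lemma dwa_abs_le_exp_quarter (M x : ℝ) (hM : 0 < M) :
    |x| ≤ 2 * M * Real.exp ((1/M)^2/4 * x^2) := by
  have h1 : (1/M)^2/4 * x^2 + 1 ≤ Real.exp ((1/M)^2/4 * x^2) := Real.add_one_le_exp _
  have h2 : 2 * M * ((1/M)^2/4 * x^2 + 1) ≤ 2 * M * Real.exp ((1/M)^2/4 * x^2) :=
    mul_le_mul_of_nonneg_left h1 (by positivity)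
  have h3 : 2 * M * ((1/M)^2/4 * x^2 + 1) = x^2/(2*M) + 2*M := by field_simp; ring
  have h4 : |x| ≤ x^2/(2*M) + 2*M := by
    rw [div_add' _ _ _ (by positivity), le_div_iff₀ (by positivity)]
    nlinarith [sq_nonneg (|x| - 2*M), sq_abs x, abs_nonneg x]
  linarith

open Real in
lemma dwa_pointwise_bound (ε T M t : ℝ) (hε : 0 < ε) (hε2 : 2*ε ≤ 1) (hT : 2 ≤ T)
    (hM : 0 < M) (hTM : T ^ ε ≤ T / M) :
    |Real.exp (-(1/M)^2 * (t-T)^2) * (Real.tanh (Real.pi * t) - 1) * t| ≤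
      2 * Real.exp (-(T ^ (2*ε)) / 8) * (2*M + T) * Real.exp (-((1/M)^2/4) * (t-T)^2) := by
  set c : ℝ := (1/M)^2 with hc
  have hc0 : 0 < c := by positivity
  have hT0 : (0:ℝ) < T := by linarith
  have hu : (T ^ ε)^2 = T ^ (2*ε) := by
    rw [← Real.rpow_natCast (T ^ ε) 2, ← Real.rpow_mul hT0.le]
    norm_num [mul_comm]
  have claim1 : Real.exp (-c * (t-T)^2) * |Real.tanh (Real.pi * t) - 1| ≤
      2 * Real.exp (-(T ^ (2*ε)) / 8) * Real.exp (-(c/2) * (t-T)^2) := by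
    rcases le_or_gt t (T/2) with h | h
    · have habs : |Real.tanh (Real.pi * t) - 1| ≤ 2 := by
        have := dwa_abs_tanh_le_one (Real.pi * t)
        rcases abs_cases (Real.tanh (Real.pi * t)) with ⟨h1, _⟩ | ⟨h1, _⟩ <;>
          rcases abs_cases (Real.tanh (Real.pi * t) - 1) with ⟨h2, _⟩ | ⟨h2, _⟩ <;> linarith
      have hdist : T/2 ≤ T - t := by linarith
      have hsq : (T/2)^2 ≤ (t-T)^2 := by nlinarith
      have hkey : T ^ (2*ε) / 8 ≤ c/2 * (t-T)^2 := by
        have h5 : (T^ε)^2 ≤ (T/M)^2 := by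
          apply sq_le_sq' _ hTM
          have : 0 < T ^ ε := Real.rpow_pos_of_pos hT0 _
          linarith
        have h6 : (T/M)^2 = c * T^2 := by rw [hc]; field_simp
        have h7 : c/2 * (t-T)^2 ≥ c/2 * (T/2)^2 := by nlinarith
        have h8 : c/2 * (T/2)^2 = c * T^2 / 8 := by ring
        rw [← hu]
        nlinarith
      have hexp : Real.exp (-c * (t-T)^2) ≤
          Real.exp (-(T ^ (2*ε)) / 8) * Real.exp (-(c/2) * (t-T)^2) := by
        rw [← Real.exp_add]
        apply Real.exp_le_exp.2
        have h9 : (-c : ℝ) * (t-T)^2 = -(c/2) * (t-T)^2 + (-(c/2) * (t-T)^2) := by ring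
        rw [h9]
        have : -(c/2) * (t-T)^2 ≤ -(T ^ (2*ε)) / 8 := by linarith
        linarith
      calc Real.exp (-c * (t-T)^2) * |Real.tanh (Real.pi * t) - 1|
          ≤ (Real.exp (-(T ^ (2*ε)) / 8) * Real.exp (-(c/2) * (t-T)^2)) * 2 := by
            apply mul_le_mul hexp habs (abs_nonneg _) (by positivity)
        _ = 2 * Real.exp (-(T ^ (2*ε)) / 8) * Real.exp (-(c/2) * (t-T)^2) := by ring
    · have ht0 : 0 ≤ Real.pi * t := by
        have := Real.pi_pos; nlinarith
      have htanh : |Real.tanh (Real.pi * t) - 1| ≤ 2 * Real.exp (-(2 * (Real.pi * t))) := by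
        have h1 := dwa_one_sub_tanh_le (Real.pi * t)
        have h2 : Real.tanh (Real.pi * t) ≤ 1 := by
          have := dwa_abs_tanh_le_one (Real.pi * t)
          rcases abs_cases (Real.tanh (Real.pi * t)) with ⟨h3, _⟩ | ⟨h3, _⟩ <;> linarith
        rw [abs_of_nonpos (by linarith)]
        linarith
      have hdecay : Real.exp (-(2 * (Real.pi * t))) ≤ Real.exp (-(T ^ (2*ε)) / 8) := by
        apply Real.exp_le_exp.2
        have hπ : (1:ℝ) ≤ Real.pi := by have := Real.pi_gt_three; linarith
        have h9 : T ^ (2*ε) ≤ T := by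
          calc T ^ (2*ε) ≤ T ^ (1:ℝ) :=
                Real.rpow_le_rpow_of_exponent_le (by linarith) hε2
            _ = T := Real.rpow_one T
        nlinarith [Real.rpow_pos_of_pos hT0 (2*ε)]
      have hgauss : Real.exp (-c * (t-T)^2) ≤ Real.exp (-(c/2) * (t-T)^2) := by
        apply Real.exp_le_exp.2; nlinarith [sq_nonneg (t-T)]
      calc Real.exp (-c * (t-T)^2) * |Real.tanh (Real.pi * t) - 1|
          ≤ Real.exp (-(c/2) * (t-T)^2) * (2 * Real.exp (-(T ^ (2*ε)) / 8)) := by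
            apply mul_le_mul hgauss (le_trans htanh
              (by nlinarith [Real.exp_pos (-(2 * (Real.pi * t))), hdecay]))
              (abs_nonneg _) (by positivity)
        _ = 2 * Real.exp (-(T ^ (2*ε)) / 8) * Real.exp (-(c/2) * (t-T)^2) := by ring
  have claim2 : Real.exp (-(c/2) * (t-T)^2) * |t| ≤
      (2*M + T) * Real.exp (-(c/4) * (t-T)^2) := by
    have h1 : |t| ≤ |t - T| + T := by
      have h := abs_sub_abs_le_abs_sub t T
      rw [abs_of_pos hT0] at h
      linarith
    have h2 : |t - T| * Real.exp (-(c/2) * (t-T)^2) ≤ 2*M * Real.exp (-(c/4) * (t-T)^2) := by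
      have h3 := dwa_abs_le_exp_quarter M (t - T) hM
      calc |t - T| * Real.exp (-(c/2) * (t-T)^2)
          ≤ (2 * M * Real.exp (c/4 * (t-T)^2)) * Real.exp (-(c/2) * (t-T)^2) :=
            mul_le_mul_of_nonneg_right h3 (Real.exp_pos _).le
        _ = 2*M * Real.exp (-(c/4) * (t-T)^2) := by
            rw [mul_assoc, ← Real.exp_add]; ring_nf
    have h4 : Real.exp (-(c/2) * (t-T)^2) ≤ Real.exp (-(c/4) * (t-T)^2) := by
      apply Real.exp_le_exp.2; nlinarith [sq_nonneg (t-T)]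
    calc Real.exp (-(c/2) * (t-T)^2) * |t|
        ≤ Real.exp (-(c/2) * (t-T)^2) * (|t - T| + T) := by
          apply mul_le_mul_of_nonneg_left h1 (Real.exp_pos _).le
      _ = |t - T| * Real.exp (-(c/2) * (t-T)^2) + T * Real.exp (-(c/2) * (t-T)^2) := by ring
      _ ≤ 2*M * Real.exp (-(c/4) * (t-T)^2) + T * Real.exp (-(c/4) * (t-T)^2) := by
          have := mul_le_mul_of_nonneg_left h4 hT0.le
          linarith
      _ = (2*M + T) * Real.exp (-(c/4) * (t-T)^2) := by ring
  rw [abs_mul, abs_mul, abs_of_pos (Real.exp_pos _)]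
  calc Real.exp (-c * (t-T)^2) * |Real.tanh (Real.pi * t) - 1| * |t|
      ≤ (2 * Real.exp (-(T ^ (2*ε)) / 8) * Real.exp (-(c/2) * (t-T)^2)) * |t| :=
        mul_le_mul_of_nonneg_right claim1 (abs_nonneg _)
    _ = 2 * Real.exp (-(T ^ (2*ε)) / 8) * (Real.exp (-(c/2) * (t-T)^2) * |t|) := by ring
    _ ≤ 2 * Real.exp (-(T ^ (2*ε)) / 8) * ((2*M + T) * Real.exp (-(c/4) * (t-T)^2)) := by
        apply mul_le_mul_of_nonneg_left claim2 (by positivity)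
    _ = 2 * Real.exp (-(T ^ (2*ε)) / 8) * (2*M + T) * Real.exp (-((1/M)^2/4) * (t-T)^2) := by
        rw [hc]; ring_nf

/-- For `T^ε ≤ M ≤ T^{1-ε}`,
`(1/π²) ∫_ℝ h(t) tanh(πt) t dt = (2/(π√π)) M T (1 + O_A(T^{-A}))`. -/
theorem diagonal_weight_asymptotic (ε : ℝ) (hε : ε ∈ Set.Ioo (0 : ℝ) (1 / 2))
    (A : ℝ) (hA : 0 ≤ A) :
    ∃ C : ℝ, ∀ T M : ℝ, 2 ≤ T → T ^ ε ≤ M → M ≤ T ^ (1 - ε) →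
      |(1 / Real.pi ^ 2) * (∫ t : ℝ, hfun T M t * Real.tanh (Real.pi * t) * t)
        - (2 / (Real.pi * Real.sqrt Real.pi)) * M * T|
        ≤ C * (M * T) * T ^ (-A) := by
  obtain ⟨hε0, hε1⟩ := hε
  obtain ⟨C₀, hC₀0, hC₀⟩ := dwa_decay ε A hε0 hA
  refine ⟨24 * C₀, fun T M hT hM1 hM2 => ?_⟩
  have hT0 : (0:ℝ) < T := by linarith
  have hT1 : (1:ℝ) ≤ T := by linarith
  have hM0 : 0 < M := lt_of_lt_of_le (Real.rpow_pos_of_pos hT0 ε) hM1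
  have hMT : M ≤ T := by
    refine le_trans hM2 ?_
    calc T^(1-ε) ≤ T^(1:ℝ) := Real.rpow_le_rpow_of_exponent_le hT1 (by linarith)
      _ = T := Real.rpow_one T
  have hTM : T ^ ε ≤ T / M := by
    have h1 : T / T^(1-ε) ≤ T / M :=
      div_le_div_of_nonneg_left hT0.le hM0 hM2
    have h2 : T ^ (1 - (1-ε)) = T ^ (1:ℝ) / T^(1-ε) := Real.rpow_sub hT0 1 (1-ε)
    rw [show (1:ℝ) - (1-ε) = ε by ring, Real.rpow_one] at h2
    rw [h2]; exact h1
  set c : ℝ := (1/M)^2 with hc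
  have hc0 : 0 < c := by positivity
  -- pointwise rewrite of the integrand
  have hfun_eq : ∀ t : ℝ, hfun T M t * Real.tanh (Real.pi * t) * t =
      Real.exp (-c*(t-T)^2) * Real.tanh (Real.pi*t) * t
        + Real.exp (-c*(t+T)^2) * Real.tanh (Real.pi*t) * t := by
    intro t
    have e1 : βfun ((t - T)/M) = Real.exp (-c*(t-T)^2) :=
      congrArg Real.exp (by rw [hc]; ring)
    have e2 : βfun ((t + T)/M) = Real.exp (-c*(t+T)^2) :=
      congrArg Real.exp (by rw [hc]; ring)
    rw [hfun, e1, e2]; ring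
  -- integrability
  have intF : ∀ S : ℝ, Integrable
      (fun t : ℝ => Real.exp (-c*(t-S)^2) * Real.tanh (Real.pi*t) * t) := by
    intro S
    have hm : AEStronglyMeasurable (fun t : ℝ => Real.tanh (Real.pi * t)) volume :=
      (dwa_cont_tanh.comp (continuous_const.mul continuous_id)).aestronglyMeasurable
    have h1 : Integrable
        (fun t : ℝ => Real.tanh (Real.pi * t) * (Real.exp (-c*(t-S)^2) * t)) :=
      Integrable.bdd_mul (dwa_int_gauss_mul c S hc0) hm
        (Filter.Eventually.of_forall fun x => by rw [Real.norm_eq_abs]; exact (dwa_abs_tanh_le_one _ : _ ≤ (1:ℝ)))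
    exact h1.congr (Filter.Eventually.of_forall fun t => by ring)
  have intF2 : Integrable
      (fun t : ℝ => Real.exp (-c*(t+T)^2) * Real.tanh (Real.pi*t) * t) :=
    (intF (-T)).congr (Filter.Eventually.of_forall fun t => by
      simp [sub_neg_eq_add])
  -- split the integral
  have hsplit : (∫ t : ℝ, hfun T M t * Real.tanh (Real.pi*t) * t) =
      (∫ t : ℝ, Real.exp (-c*(t-T)^2) * Real.tanh (Real.pi*t) * t)
        + ∫ t : ℝ, Real.exp (-c*(t+T)^2) * Real.tanh (Real.pi*t) * t := by
    rw [show (fun t : ℝ => hfun T M t * Real.tanh (Real.pi*t) * t) =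
        fun t : ℝ => Real.exp (-c*(t-T)^2) * Real.tanh (Real.pi*t) * t
          + Real.exp (-c*(t+T)^2) * Real.tanh (Real.pi*t) * t from funext hfun_eq]
    exact integral_add (intF T) intF2
  -- symmetry
  have hsym : (∫ t : ℝ, Real.exp (-c*(t+T)^2) * Real.tanh (Real.pi*t) * t) =
      ∫ t : ℝ, Real.exp (-c*(t-T)^2) * Real.tanh (Real.pi*t) * t := by
    have h := integral_neg_eq_self
      (fun t : ℝ => Real.exp (-c*(t-T)^2) * Real.tanh (Real.pi*t) * t) (volume : Measure ℝ)
    rw [← h]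
    congr 1
    funext t
    rw [show Real.pi * -t = -(Real.pi * t) from by ring, Real.tanh_neg,
      show (-t - T)^2 = (t+T)^2 from by ring]
    ring
  -- error term
  set E : ℝ := (∫ t : ℝ, Real.exp (-c*(t-T)^2) * Real.tanh (Real.pi*t) * t)
      - Real.sqrt (Real.pi/c) * T with hE
  have hEeq : E = ∫ t : ℝ, Real.exp (-c*(t-T)^2) * (Real.tanh (Real.pi*t) - 1) * t := by
    rw [hE, ← dwa_gauss_moment c T hc0, ← integral_sub (intF T) (dwa_int_gauss_mul c T hc0)]
    congr 1
    funext t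
    ring
  -- bound the error
  have hEbound : |E| ≤ 2 * Real.exp (-(T^(2*ε))/8) * (2*M+T) * Real.sqrt (Real.pi/(c/4)) := by
    rw [hEeq]
    have hc4 : (0:ℝ) < c/4 := by positivity
    have hInt : Integrable (fun t : ℝ =>
        2 * Real.exp (-(T^(2*ε))/8) * (2*M+T) * Real.exp (-(c/4)*(t-T)^2)) :=
      (dwa_int_gauss (c/4) T hc4).const_mul _
    have hbd := norm_integral_le_of_norm_le hInt (Filter.Eventually.of_forall fun t => by
      rw [Real.norm_eq_abs]
      have := dwa_pointwise_bound ε T M t hε0 (by linarith) hT hM0 hTM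
      rw [← hc] at this
      exact this)
    rw [Real.norm_eq_abs] at hbd
    calc |∫ t : ℝ, Real.exp (-c*(t-T)^2) * (Real.tanh (Real.pi*t) - 1) * t|
        ≤ ∫ t : ℝ, 2 * Real.exp (-(T^(2*ε))/8) * (2*M+T) * Real.exp (-(c/4)*(t-T)^2) := hbd
      _ = 2 * Real.exp (-(T^(2*ε))/8) * (2*M+T) * ∫ t : ℝ, Real.exp (-(c/4)*(t-T)^2) :=
          MeasureTheory.integral_const_mul _ _
      _ = 2 * Real.exp (-(T^(2*ε))/8) * (2*M+T) * Real.sqrt (Real.pi/(c/4)) := by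
          rw [dwa_gauss_integral (c/4) T hc4]
  -- evaluate the square roots
  have hsqrt1 : Real.sqrt (Real.pi/c) = Real.sqrt Real.pi * M := by
    rw [show Real.pi/c = Real.pi * M^2 from by rw [hc]; field_simp,
      Real.sqrt_mul Real.pi_pos.le, Real.sqrt_sq hM0.le]
  have hsqrt2 : Real.sqrt (Real.pi/(c/4)) = 2 * (Real.sqrt Real.pi * M) := by
    rw [show Real.pi/(c/4) = (2*M)^2 * Real.pi from by rw [hc]; field_simp; ring,
      Real.sqrt_mul (sq_nonneg _), Real.sqrt_sq (by positivity)]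
    ring
  -- the algebraic identity
  have hππ : Real.sqrt Real.pi * Real.sqrt Real.pi = Real.pi :=
    Real.mul_self_sqrt Real.pi_pos.le
  have hid : (2:ℝ) / (Real.pi * Real.sqrt Real.pi) = 2 * Real.sqrt Real.pi / Real.pi^2 := by
    rw [div_eq_div_iff (by positivity) (by positivity)]
    linear_combination (-2*Real.pi) * hππ
  have hI1 : (∫ t : ℝ, Real.exp (-c*(t-T)^2) * Real.tanh (Real.pi*t) * t)
      = Real.sqrt Real.pi * M * T + E := by
    rw [hE, hsqrt1]; ring
  have key : (1 / Real.pi ^ 2) * (∫ t : ℝ, hfun T M t * Real.tanh (Real.pi * t) * t)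
      - (2 / (Real.pi * Real.sqrt Real.pi)) * M * T = (2/Real.pi^2) * E := by
    rw [hsplit, hsym, hI1, hid]
    ring
  rw [key, abs_mul]
  have hpi2 : |(2:ℝ)/Real.pi^2| ≤ 1 := by
    rw [abs_of_pos (by positivity), div_le_one (by positivity)]
    nlinarith [Real.pi_gt_three]
  have hsqrtpi : Real.sqrt Real.pi ≤ 2 := by
    rw [show (2:ℝ) = Real.sqrt 4 from by rw [show (4:ℝ) = 2^2 by norm_num, Real.sqrt_sq]; norm_num]
    exact Real.sqrt_le_sqrt (by nlinarith [Real.pi_lt_d2])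
  have hMT3 : 2*M + T ≤ 3*T := by linarith
  have hexp0 := Real.exp_pos (-(T^(2*ε))/8)
  have hfinal : |E| ≤ 24 * (M*T) * Real.exp (-(T^(2*ε))/8) := by
    refine le_trans hEbound ?_
    rw [hsqrt2]
    have hq : (2*M+T) * (2 * (Real.sqrt Real.pi * M)) ≤ 12 * (M * T) := by
      have h1 : Real.sqrt Real.pi * M ≤ 2 * M := mul_le_mul_of_nonneg_right hsqrtpi hM0.le
      have h2 : (0:ℝ) ≤ 2*M+T := by linarith
      calc (2*M+T) * (2 * (Real.sqrt Real.pi * M)) ≤ (2*M+T) * (2 * (2*M)) :=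
            mul_le_mul_of_nonneg_left (by linarith) h2
        _ ≤ (3*T) * (2 * (2*M)) := mul_le_mul_of_nonneg_right hMT3 (by positivity)
        _ = 12 * (M*T) := by ring
    calc 2 * Real.exp (-(T^(2*ε))/8) * (2*M+T) * (2 * (Real.sqrt Real.pi * M))
        = (2 * Real.exp (-(T^(2*ε))/8)) * ((2*M+T) * (2 * (Real.sqrt Real.pi * M))) := by ring
      _ ≤ (2 * Real.exp (-(T^(2*ε))/8)) * (12 * (M*T)) :=
          mul_le_mul_of_nonneg_left hq (by positivity)
      _ = 24 * (M*T) * Real.exp (-(T^(2*ε))/8) := by ring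
  calc |(2:ℝ)/Real.pi^2| * |E| ≤ 1 * |E| :=
        mul_le_mul_of_nonneg_right hpi2 (abs_nonneg _)
    _ = |E| := one_mul _
    _ ≤ 24 * (M*T) * Real.exp (-(T^(2*ε))/8) := hfinal
    _ ≤ 24 * (M*T) * (C₀ * T^(-A)) := by
        have := hC₀ T hT
        have hMT0 : (0:ℝ) ≤ 24 * (M*T) := by positivity
        exact mul_le_mul_of_nonneg_left this hMT0
    _ = 24 * C₀ * (M*T) * T^(-A) := by ring
end
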